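/- Consider a scheduling game with rank-based utilities on m ≥ 2 identical machines with n ≥ 2 unit jobs, where all machines share the same priority list π (a global priority list). Then the game admits a pure Nash equilibrium if and only if m = 2 and n is odd. -/
import Mathlib


open Finset
open scoped Classical

noncomputable section

variable {J M : Type*} [Fintype J]

/-- Completion time of job `j` in profile `s`: the total processing time of the jobs on
`j`'s machine that do not come after `j` in that machine's priority list, divided by the speed. -/
def Ctime (p : J → ℝ) (r : M → ℝ) (π : M → J → ℕ) (s : J → M) (j : J) : ℝ :=
  (∑ j' ∈ univ.filter (fun j' => s j' = s j ∧ π (s j) j' ≤ π (s j) j), p j') / r (s j)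

/-- Rank of job `j` in profile `s`. -/
def rankOf (p : J → ℝ) (r : M → ℝ) (π : M → J → ℕ) (s : J → M) (j : J) : ℝ :=
  ((univ.filter (fun j' => Ctime p r π s j' < Ctime p r π s j)).card : ℝ) +
    (((univ.filter (fun j' => Ctime p r π s j' = Ctime p r π s j)).card : ℝ) + 1) / 2

/-- The unilateral deviation of job `j` to machine `i` is beneficial. -/
def Beneficial (p : J → ℝ) (r : M → ℝ) (π : M → J → ℕ) (s : J → M) (j : J) (i : M) : Prop :=
  rankOf p r π (Function.update s j i) j < rankOf p r π s j ∨
    (rankOf p r π (Function.update s j i) j = rankOf p r π s j ∧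
      Ctime p r π (Function.update s j i) j < Ctime p r π s j)

/-- Pure Nash equilibrium: no job has a beneficial deviation. -/
def IsNE (p : J → ℝ) (r : M → ℝ) (π : M → J → ℕ) (s : J → M) : Prop :=
  ∀ j i, ¬ Beneficial p r π s j i

noncomputable section Core

variable {n m : ℕ}

/-- helper: counting over `Fin n` via `range n`. -/
lemma card_filter_val (P : ℕ → Prop) :
    (univ.filter (fun j : Fin n => P j.val)).card = ((range n).filter (fun v => P v)).card := by
  apply Finset.card_bij (fun a _ => a.val)
  · intro a ha; simp only [mem_filter, mem_range, mem_univ, true_and] at ha ⊢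
    exact ⟨a.isLt, ha⟩
  · intro a _ b _ h; exact Fin.ext h
  · intro v hv; simp only [mem_filter, mem_range, mem_univ, true_and] at hv
    exact ⟨⟨v, hv.1⟩, by simp [hv.2], rfl⟩

lemma card_filter_univ_eq (p : Fin n → Prop) (q : ℕ → Prop) [DecidablePred p] [DecidablePred q]
    (h : ∀ x : Fin n, p x ↔ q x.val) :
    (univ.filter p).card = ((range n).filter q).card := by
  apply Finset.card_bij (fun a _ => a.val)
  · intro a ha
    rw [mem_filter] at ha
    rw [mem_filter, mem_range]
    exact ⟨a.isLt, (h a).1 ha.2⟩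
  · intro a _ b _ hab
    exact Fin.ext hab
  · intro v hv
    rw [mem_filter, mem_range] at hv
    exact ⟨⟨v, hv.1⟩, by rw [mem_filter]; exact ⟨mem_univ _, (h _).2 hv.2⟩, rfl⟩

lemma card_range_filter_Ico (n a b : ℕ) :
    ((range n).filter (fun v => a ≤ v ∧ v < b)).card = min b n - a := by
  have h : (range n).filter (fun v => a ≤ v ∧ v < b) = Ico a (min b n) := by
    ext v; simp only [mem_filter, mem_range, mem_Ico, lt_min_iff]; omega
  rw [h, Nat.card_Ico]

lemma card_range_filter_lt (n b : ℕ) :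
    ((range n).filter (fun v => v < b)).card = min b n := by
  have h : (range n).filter (fun v => v < b) = range (min b n) := by
    ext v; simp only [mem_filter, mem_range, lt_min_iff]; omega
  rw [h, card_range]

/-- number of jobs on `j`'s machine not after `j`. -/
def Nv (s : Fin n → Fin m) (j : Fin n) : ℕ :=
  (univ.filter (fun j' => s j' = s j ∧ j' ≤ j)).card

/-- twice the rank, minus one. -/
def score (s : Fin n → Fin m) (j : Fin n) : ℕ :=
  2 * (univ.filter (fun j' => Nv s j' < Nv s j)).card +
    (univ.filter (fun j' => Nv s j' = Nv s j)).card

lemma Ctime_eq (s : Fin n → Fin m) (j : Fin n) :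
    Ctime (fun _ => (1:ℝ)) (fun _ => (1:ℝ)) (fun _ => Fin.val) s j = Nv s j := by
  unfold Ctime Nv
  rw [div_one, Finset.sum_const, nsmul_eq_mul, mul_one, Nat.cast_inj]
  congr 1
  ext x
  simp only [mem_filter, mem_univ, true_and, Fin.le_def]

lemma rankOf_eq (s : Fin n → Fin m) (j : Fin n) :
    rankOf (fun _ => (1:ℝ)) (fun _ => (1:ℝ)) (fun _ => Fin.val) s j
      = ((score s j : ℝ) + 1) / 2 := by
  have hlt : (univ.filter (fun j' => Ctime (fun _ => (1:ℝ)) (fun _ => (1:ℝ)) (fun _ => Fin.val) s j' <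
      Ctime (fun _ => (1:ℝ)) (fun _ => (1:ℝ)) (fun _ => Fin.val) s j))
      = (univ.filter (fun j' => Nv s j' < Nv s j)) := by
    ext x
    simp only [mem_filter, mem_univ, true_and, Ctime_eq, Nat.cast_lt]
  have heq : (univ.filter (fun j' => Ctime (fun _ => (1:ℝ)) (fun _ => (1:ℝ)) (fun _ => Fin.val) s j' =
      Ctime (fun _ => (1:ℝ)) (fun _ => (1:ℝ)) (fun _ => Fin.val) s j))
      = (univ.filter (fun j' => Nv s j' = Nv s j)) := by
    ext x
    simp only [mem_filter, mem_univ, true_and, Ctime_eq, Nat.cast_inj]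
  unfold rankOf score
  rw [hlt, heq]
  push_cast
  ring

lemma Beneficial_iff (s : Fin n → Fin m) (j : Fin n) (i : Fin m) :
    Beneficial (fun _ => (1:ℝ)) (fun _ => (1:ℝ)) (fun _ => Fin.val) s j i ↔
      (score (Function.update s j i) j < score s j ∨
        (score (Function.update s j i) j = score s j ∧
          Nv (Function.update s j i) j < Nv s j)) := by
  have h1 : ∀ a b : ℕ, (((a:ℝ)+1)/2 < ((b:ℝ)+1)/2 ↔ a < b) := by
    intro a b
    constructor
    · intro h; exact_mod_cast (by linarith : (a:ℝ) < b)
    · intro h; have : (a:ℝ) < b := by exact_mod_cast h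
      linarith
  have h2 : ∀ a b : ℕ, (((a:ℝ)+1)/2 = ((b:ℝ)+1)/2 ↔ a = b) := by
    intro a b
    constructor
    · intro h; exact_mod_cast (by linarith : (a:ℝ) = b)
    · intro h; subst h; rfl
  unfold Beneficial
  rw [rankOf_eq, rankOf_eq, h1, h2, Ctime_eq, Ctime_eq, Nat.cast_lt]
  congr!



variable {s : Fin n → Fin m} {i b : Fin m} {j j' : Fin n} {u : ℕ}

lemma Nv_eq_cnt (s : Fin n → Fin m) (j : Fin n) :
    Nv s j = (univ.filter (fun x => s x = s j ∧ x < j)).card + 1 := by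
  unfold Nv
  have h : univ.filter (fun x => s x = s j ∧ x ≤ j)
      = insert j (univ.filter (fun x => s x = s j ∧ x < j)) := by
    ext x
    simp only [mem_filter, mem_univ, true_and, mem_insert]
    constructor
    · rintro ⟨h1, h2⟩
      rcases eq_or_ne x j with h3 | h3
      · exact Or.inl h3
      · exact Or.inr ⟨h1, lt_of_le_of_ne h2 h3⟩
    · rintro (rfl | ⟨h1, h2⟩)
      · exact ⟨rfl, le_refl _⟩
      · exact ⟨h1, le_of_lt h2⟩
  rw [h, card_insert_of_notMem (by simp)]

lemma Nv_update_self (h : i ≠ s j) :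
    Nv (Function.update s j i) j
      = (univ.filter (fun x => s x = i ∧ x < j)).card + 1 := by
  unfold Nv
  have h1 : univ.filter (fun x => Function.update s j i x = Function.update s j i j ∧ x ≤ j)
      = insert j (univ.filter (fun x => s x = i ∧ x < j)) := by
    ext x
    simp only [mem_filter, mem_univ, true_and, mem_insert, Function.update_self]
    rcases eq_or_ne x j with rfl | hx
    · simp
    · rw [Function.update_of_ne hx]
      constructor
      · rintro ⟨h2, h3⟩; exact Or.inr ⟨h2, lt_of_le_of_ne h3 hx⟩
      · rintro (h2 | ⟨h2, h3⟩)
        · exact absurd h2 hx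
        · exact ⟨h2, le_of_lt h3⟩
  rw [h1, card_insert_of_notMem (by simp)]

lemma Nv_update_src (h : i ≠ s j) (hlt : j < j') (hs : s j' = s j) :
    Nv (Function.update s j i) j' + 1 = Nv s j' := by
  unfold Nv
  have hne : j' ≠ j := ne_of_gt hlt
  have e1 : Function.update s j i j' = s j' := Function.update_of_ne hne _ _
  have h1 : univ.filter (fun x => Function.update s j i x = Function.update s j i j' ∧ x ≤ j')
      = (univ.filter (fun x => s x = s j' ∧ x ≤ j')).erase j := by
    ext x
    simp only [mem_filter, mem_univ, true_and, mem_erase, e1]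
    rcases eq_or_ne x j with rfl | hx
    · rw [Function.update_self]
      constructor
      · rintro ⟨h2, _⟩; exact absurd (h2.trans hs) h
      · rintro ⟨h2, _⟩; exact absurd rfl h2
    · rw [Function.update_of_ne hx]
      tauto
  have hmem : j ∈ univ.filter (fun x => s x = s j' ∧ x ≤ j') := by
    simp only [mem_filter, mem_univ, true_and]
    exact ⟨hs.symm, le_of_lt hlt⟩
  rw [h1, card_erase_of_mem hmem, Nat.sub_add_cancel (card_pos.mpr ⟨j, hmem⟩)]

lemma Nv_update_tgt (h : i ≠ s j) (hlt : j < j') (hs : s j' = i) :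
    Nv (Function.update s j i) j' = Nv s j' + 1 := by
  unfold Nv
  have hne : j' ≠ j := ne_of_gt hlt
  have e1 : Function.update s j i j' = s j' := Function.update_of_ne hne _ _
  have h1 : univ.filter (fun x => Function.update s j i x = Function.update s j i j' ∧ x ≤ j')
      = insert j (univ.filter (fun x => s x = s j' ∧ x ≤ j')) := by
    ext x
    simp only [mem_filter, mem_univ, true_and, mem_insert, e1]
    rcases eq_or_ne x j with rfl | hx
    · rw [Function.update_self]
      simp [hs.symm, le_of_lt hlt]
    · rw [Function.update_of_ne hx]
      tauto
  rw [h1, card_insert_of_notMem]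
  simp only [mem_filter, mem_univ, true_and, not_and]
  intro h2
  exact absurd (h2.trans hs).symm h

lemma Nv_update_other (hne : j' ≠ j)
    (hcase : j' < j ∨ (s j' ≠ i ∧ s j' ≠ s j)) :
    Nv (Function.update s j i) j' = Nv s j' := by
  unfold Nv
  have e1 : Function.update s j i j' = s j' := Function.update_of_ne hne _ _
  congr 1
  ext x
  simp only [mem_filter, mem_univ, true_and, e1]
  rcases eq_or_ne x j with rfl | hx
  · rw [Function.update_self]
    constructor
    · rintro ⟨h2, h3⟩
      rcases hcase with h4 | h4
      · exact absurd h3 (not_le.mpr h4)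
      · exact absurd h2.symm h4.1
    · rintro ⟨h2, h3⟩
      rcases hcase with h4 | h4
      · exact absurd h3 (not_le.mpr h4)
      · exact absurd h2.symm h4.2
  · rw [Function.update_of_ne hx]

lemma Nv_lt_of_lt (hlt : j' < j) (hs : s j' = s j) : Nv s j' < Nv s j := by
  unfold Nv
  apply card_lt_card
  constructor
  · intro x hx
    simp only [mem_filter, mem_univ, true_and] at hx ⊢
    exact ⟨hx.1.trans hs, le_trans hx.2 (le_of_lt hlt)⟩
  · intro hsub
    have hj : j ∈ univ.filter (fun x => s x = s j ∧ x ≤ j) := by simp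
    have := hsub hj
    simp only [mem_filter, mem_univ, true_and] at this
    exact absurd this.2 (not_le.mpr hlt)

lemma cnt_lt_Nv_of_gt (hlt : j < j') (hb : s j' = b) :
    (univ.filter (fun x => s x = b ∧ x < j)).card < Nv s j' := by
  unfold Nv
  apply card_lt_card
  constructor
  · intro x hx
    simp only [mem_filter, mem_univ, true_and] at hx ⊢
    exact ⟨hx.1.trans hb.symm, le_of_lt (lt_trans hx.2 hlt)⟩
  · intro hsub
    have hj : j' ∈ univ.filter (fun x => s x = s j' ∧ x ≤ j') := by simp
    have := hsub hj
    simp only [mem_filter, mem_univ, true_and] at this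
    exact absurd this.2 (not_lt.mpr (le_of_lt hlt))

lemma exists_Nv_pred (hj : 2 ≤ Nv s j) :
    ∃ j₁, s j₁ = s j ∧ j₁ < j ∧ Nv s j₁ + 1 = Nv s j := by
  have hcnt := Nv_eq_cnt s j
  have hne : (univ.filter (fun x => s x = s j ∧ x < j)).Nonempty := by
    rw [← card_pos]; omega
  obtain ⟨j₁, hmem, hmax⟩ := Finset.exists_max_image _ id hne
  rw [mem_filter] at hmem
  refine ⟨j₁, hmem.2.1, hmem.2.2, ?_⟩
  have heq : univ.filter (fun x => s x = s j₁ ∧ x ≤ j₁)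
      = univ.filter (fun x => s x = s j ∧ x < j) := by
    ext x
    simp only [mem_filter, mem_univ, true_and, hmem.2.1]
    constructor
    · rintro ⟨h1, h2⟩
      exact ⟨h1, lt_of_le_of_lt h2 hmem.2.2⟩
    · rintro ⟨h1, h2⟩
      refine ⟨h1, hmax x ?_⟩
      simp only [mem_filter, mem_univ, true_and]
      exact ⟨h1, h2⟩
  have hq : Nv s j₁ = (univ.filter (fun x => s x = s j ∧ x < j)).card := by
    unfold Nv; rw [heq]
  omega

lemma exists_Nv_eq (hu1 : 1 ≤ u) (hu : u ≤ Nv s j) :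
    ∃ j₀, s j₀ = s j ∧ Nv s j₀ = u := by
  suffices h : ∀ d (j : Fin n), u ≤ Nv s j → Nv s j - u = d → ∃ j₀, s j₀ = s j ∧ Nv s j₀ = u by
    exact h (Nv s j - u) j hu rfl
  intro d
  induction d with
  | zero => intro j h1 h2; exact ⟨j, rfl, by omega⟩
  | succ d ih =>
    intro j h1 h2
    obtain ⟨j₁, ha, _, hc⟩ := exists_Nv_pred (s := s) (j := j) (by omega)
    obtain ⟨j₀, h4, h5⟩ := ih j₁ (by omega) (by omega)
    exact ⟨j₀, h4.trans ha, h5⟩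

lemma beneficial_of_imbalance (hi : i ≠ s j)
    (himb : (univ.filter (fun x => s x = i ∧ x < j)).card
          < (univ.filter (fun x => s x = s j ∧ x < j)).card) :
    Beneficial (fun _ => (1:ℝ)) (fun _ => (1:ℝ)) (fun _ => Fin.val) s j i := by
  set s' := Function.update s j i with hs'
  set u := (univ.filter (fun x => s x = i ∧ x < j)).card + 1 with hu
  have ht : Nv s j = (univ.filter (fun x => s x = s j ∧ x < j)).card + 1 := Nv_eq_cnt s j
  have hut : u < Nv s j := by omega
  have hNv'j : Nv s' j = u := Nv_update_self hi
  have hchange : ∀ x, x ≠ j → (Nv s' x = Nv s x ∨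
      (Nv s' x + 1 = Nv s x ∧ Nv s j < Nv s x) ∨
      (Nv s' x = Nv s x + 1 ∧ u ≤ Nv s x)) := by
    intro x hx
    rcases lt_or_gt_of_ne hx with hlt | hgt
    · exact Or.inl (Nv_update_other hx (Or.inl hlt))
    · by_cases h1 : s x = s j
      · exact Or.inr (Or.inl ⟨Nv_update_src hi hgt h1,
          Nv_lt_of_lt (j' := j) (j := x) hgt h1.symm⟩)
      · by_cases h2 : s x = i
        · refine Or.inr (Or.inr ⟨Nv_update_tgt hi hgt h2, ?_⟩)
          have := cnt_lt_Nv_of_gt (b := i) (j := j) (j' := x) hgt h2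
          omega
        · exact Or.inl (Nv_update_other hx (Or.inr ⟨h2, h1⟩))
  have hA : univ.filter (fun x => Nv s' x < Nv s' j) = univ.filter (fun x => Nv s x < u) := by
    ext x
    simp only [mem_filter, mem_univ, true_and, hNv'j]
    rcases eq_or_ne x j with rfl | hx
    · rw [hNv'j]
      omega
    · rcases hchange x hx with h | h | h <;> omega
  have hE' : univ.filter (fun x => Nv s' x = Nv s' j) ⊆ insert j (univ.filter (fun x => Nv s x = u)) := by
    intro x hx'
    simp only [mem_filter, mem_univ, true_and, hNv'j] at hx'
    rcases eq_or_ne x j with rfl | hx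
    · exact mem_insert_self _ _
    · rcases hchange x hx with h | h | h <;>
        · apply mem_insert_of_mem
          simp only [mem_filter, mem_univ, true_and]
          omega
  obtain ⟨j₀, hj₀s, hj₀⟩ := exists_Nv_eq (u := u) (j := j) (by omega) (le_of_lt hut)
  have hEu1 : 0 < (univ.filter (fun x => Nv s x = u)).card :=
    card_pos.mpr ⟨j₀, by simp [hj₀]⟩
  have hB : (univ.filter (fun x => Nv s x < u)).card + (univ.filter (fun x => Nv s x = u)).card
      ≤ (univ.filter (fun x => Nv s x < Nv s j)).card := by
    rw [← card_union_of_disjoint (by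
      rw [disjoint_left]
      intro x h1 h2
      simp only [mem_filter, mem_univ, true_and] at h1 h2
      omega)]
    apply card_le_card
    intro x hx
    simp only [mem_union, mem_filter, mem_univ, true_and] at hx ⊢
    omega
  have hE1 : 0 < (univ.filter (fun x => Nv s x = Nv s j)).card := card_pos.mpr ⟨j, by simp⟩
  rw [Beneficial_iff]
  left
  rw [← hs']
  unfold score
  rw [hA]
  have hE'card := card_le_card hE'
  have hins := card_insert_le j (univ.filter (fun x => Nv s x = u))
  omega


/-- number of jobs among the first `k` (by priority) on machine `b`. -/
def Cnt (s : Fin n → Fin m) (b : Fin m) (k : ℕ) : ℕ :=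
  (univ.filter (fun x : Fin n => s x = b ∧ x.val < k)).card

lemma Cnt_val (s : Fin n → Fin m) (b : Fin m) (j : Fin n) :
    Cnt s b j.val = (univ.filter (fun x => s x = b ∧ x < j)).card := by
  unfold Cnt
  have hset : univ.filter (fun x : Fin n => s x = b ∧ x.val < j.val)
      = univ.filter (fun x => s x = b ∧ x < j) := by
    ext x
    simp only [mem_filter, mem_univ, true_and, Fin.lt_def]
  rw [hset]

lemma Cnt_succ (s : Fin n → Fin m) (b : Fin m) {k : ℕ} (hk : k < n) :
    Cnt s b (k+1) = Cnt s b k + (if s ⟨k, hk⟩ = b then 1 else 0) := by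
  unfold Cnt
  by_cases h : s ⟨k, hk⟩ = b
  · rw [if_pos h]
    have heq : univ.filter (fun x : Fin n => s x = b ∧ x.val < k + 1)
        = insert ⟨k, hk⟩ (univ.filter (fun x : Fin n => s x = b ∧ x.val < k)) := by
      ext x
      simp only [mem_filter, mem_univ, true_and, mem_insert]
      constructor
      · rintro ⟨h1, h2⟩
        rcases eq_or_ne (x : ℕ) k with hx | hx
        · exact Or.inl (Fin.ext hx)
        · exact Or.inr ⟨h1, by omega⟩
      · rintro (rfl | ⟨h1, h2⟩)
        · exact ⟨h, Nat.lt_succ_self k⟩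
        · exact ⟨h1, Nat.lt_succ_of_lt h2⟩
    rw [heq, card_insert_of_notMem (by simp)]
  · rw [if_neg h, Nat.add_zero]
    have hset : univ.filter (fun x : Fin n => s x = b ∧ x.val < k + 1)
        = univ.filter (fun x : Fin n => s x = b ∧ x.val < k) := by
      ext x
      simp only [mem_filter, mem_univ, true_and]
      constructor
      · rintro ⟨h1, h2⟩
        refine ⟨h1, ?_⟩
        rcases eq_or_ne (x : ℕ) k with hx | hx
        · exact absurd ((Fin.ext hx : x = ⟨k, hk⟩) ▸ h1) h
        · omega
      · rintro ⟨h1, h2⟩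
        exact ⟨h1, by omega⟩
    rw [hset, Nat.add_zero]

lemma sum_Cnt (s : Fin n → Fin m) {k : ℕ} (hk : k ≤ n) :
    ∑ b, Cnt s b k = k := by
  have h := Finset.card_eq_sum_card_fiberwise
    (f := s) (s := univ.filter (fun x : Fin n => x.val < k)) (t := univ)
    (fun x _ => mem_univ _)
  have h2 : (univ.filter (fun x : Fin n => x.val < k)).card = k := by
    refine (card_filter_univ_eq _ (fun v => v < k) (fun x => Iff.rfl)).trans ?_
    rw [card_range_filter_lt]
    omega
  have h3 : ∑ b, Cnt s b k = (univ.filter (fun x : Fin n => x.val < k)).card := by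
    rw [h]
    apply Finset.sum_congr rfl
    intro b _
    unfold Cnt
    rw [filter_filter]
    have hset : univ.filter (fun x : Fin n => x.val < k ∧ s x = b)
        = univ.filter (fun x : Fin n => s x = b ∧ x.val < k) := by
      ext x
      simp only [mem_filter, mem_univ, true_and]
      tauto
    rw [hset]
  rw [h3, h2]

lemma spread (hG : ∀ (j : Fin n) (b : Fin m),
      (univ.filter (fun x => s x = s j ∧ x < j)).card
        ≤ (univ.filter (fun x => s x = b ∧ x < j)).card) :
    ∀ k, k ≤ n → ∀ b b', Cnt s b k ≤ Cnt s b' k + 1 := by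
  intro k
  induction k with
  | zero =>
    intro _ b b'
    have hz : ∀ c, Cnt s c 0 = 0 := by
      intro c; unfold Cnt; simp
    rw [hz, hz]
    omega
  | succ k ih =>
    intro hk b b'
    have hkn : k < n := hk
    have hmin : ∀ c, Cnt s (s (⟨k, hkn⟩ : Fin n)) k ≤ Cnt s c k := by
      intro c
      have hh := hG ⟨k, hkn⟩ c
      rw [← Cnt_val, ← Cnt_val] at hh
      exact hh
    have hsb := Cnt_succ s b hkn
    have hsb' := Cnt_succ s b' hkn
    have hib := ih (by omega) b b'
    by_cases e1 : s (⟨k, hkn⟩ : Fin n) = b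
    · by_cases e2 : s (⟨k, hkn⟩ : Fin n) = b'
      · rw [← e1, ← e2]
        omega
      · rw [hsb, hsb', if_pos e1, if_neg e2]
        have h2 := hmin b'
        rw [e1] at h2
        omega
    · by_cases e2 : s (⟨k, hkn⟩ : Fin n) = b'
      · rw [hsb, hsb', if_neg e1, if_pos e2]
        omega
      · rw [hsb, hsb', if_neg e1, if_neg e2]
        omega

lemma Nv_formula (hm : 1 ≤ m)
    (hG : ∀ (j : Fin n) (b : Fin m),
      (univ.filter (fun x => s x = s j ∧ x < j)).card
        ≤ (univ.filter (fun x => s x = b ∧ x < j)).card)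
    (j : Fin n) : Nv s j = j.val / m + 1 := by
  have hsum : ∑ b, Cnt s b j.val = j.val := sum_Cnt s (le_of_lt j.isLt)
  have hminb : ∀ b, Cnt s (s j) j.val ≤ Cnt s b j.val := by
    intro b
    have hh := hG j b
    rw [← Cnt_val, ← Cnt_val] at hh
    exact hh
  have hlow : m * Cnt s (s j) j.val ≤ j.val := by
    calc m * Cnt s (s j) j.val = ∑ _b : Fin m, Cnt s (s j) j.val := by
          rw [Finset.sum_const, card_univ, Fintype.card_fin, smul_eq_mul]
      _ ≤ ∑ b, Cnt s b j.val := Finset.sum_le_sum (fun b _ => hminb b)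
      _ = j.val := hsum
  have hsp := spread hG j.val (le_of_lt j.isLt)
  have hup : j.val + 1 ≤ m * Cnt s (s j) j.val + m := by
    have hsplit : ∑ b, Cnt s b j.val
        = Cnt s (s j) j.val + ∑ b ∈ univ.erase (s j), Cnt s b j.val := by
      rw [← Finset.add_sum_erase _ _ (mem_univ (s j))]
    have hbound : ∑ b ∈ univ.erase (s j), Cnt s b j.val
        ≤ (m - 1) * (Cnt s (s j) j.val + 1) := by
      apply le_trans (Finset.sum_le_card_nsmul _ _ _ (fun b _ => hsp b (s j)))
      rw [card_erase_of_mem (mem_univ _), card_univ, Fintype.card_fin, smul_eq_mul]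
    have hkey : (m - 1) * (Cnt s (s j) j.val + 1) + Cnt s (s j) j.val + 1
        = m * Cnt s (s j) j.val + m := by
      obtain ⟨m', rfl⟩ : ∃ m', m = m' + 1 := ⟨m - 1, by omega⟩
      simp only [Nat.add_sub_cancel]
      ring
    omega
  have hC : Cnt s (s j) j.val = j.val / m := by
    symm
    apply Nat.div_eq_of_lt_le
    · rw [mul_comm]; exact hlow
    · have hr : (Cnt s (s j) j.val + 1) * m = m * Cnt s (s j) j.val + m := by ring
      omega
  rw [Nv_eq_cnt, ← Cnt_val, hC]


lemma block_machine_ne (hNv : ∀ x, Nv s x = x.val / m + 1)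
    {x y : Fin n} (hlt : x < y) (hblk : x.val / m = y.val / m) : s x ≠ s y := by
  intro h
  have hh := Nv_lt_of_lt hlt h
  rw [hNv x, hNv y] at hh
  omega

lemma beneficial_master
    (hNv : ∀ x, Nv s x = x.val / m + 1)
    {j jb : Fin n} (hlt : j < jb) (hblk : j.val / m = jb.val / m)
    (hmach : s jb ≠ s j)
    (hA : ∀ x, s x = s j → ¬ j < x)
    (hB : ∀ x, s x = s jb → j < x → x = jb) :
    Beneficial (fun _ => (1:ℝ)) (fun _ => (1:ℝ)) (fun _ => Fin.val) s j (s jb) := by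
  have hisj : s jb ≠ s j := hmach
  have hcnt : Nv s jb = (univ.filter (fun x => s x = s jb ∧ x < j)).card + 1 := by
    have hset : univ.filter (fun x => s x = s jb ∧ x ≤ jb)
        = insert jb (univ.filter (fun x => s x = s jb ∧ x < j)) := by
      ext x
      simp only [mem_filter, mem_univ, true_and, mem_insert]
      constructor
      · rintro ⟨h1, h2⟩
        rcases eq_or_ne x jb with rfl | hx
        · exact Or.inl rfl
        · right
          refine ⟨h1, ?_⟩
          by_contra hc
          have hxj : x ≠ j := by
            intro he
            rw [he] at h1
            exact hisj h1.symm
          have hjx : j < x := lt_of_le_of_ne (le_of_not_gt hc) (Ne.symm hxj)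
          exact hx (hB x h1 hjx)
      · rintro (rfl | ⟨h1, h2⟩)
        · exact ⟨rfl, le_refl _⟩
        · exact ⟨h1, le_of_lt (lt_trans h2 hlt)⟩
    have hnotmem : jb ∉ univ.filter (fun x => s x = s jb ∧ x < j) := by
      intro hmem
      rw [mem_filter] at hmem
      exact absurd hmem.2.2 (not_lt.mpr (le_of_lt hlt))
    unfold Nv
    rw [hset, card_insert_of_notMem hnotmem]
  have hcntval : (univ.filter (fun x => s x = s jb ∧ x < j)).card = j.val / m := by
    have h1 := hNv jb
    omega
  have hNv'j : Nv (Function.update s j (s jb)) j = j.val / m + 1 := by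
    rw [Nv_update_self hisj, hcntval]
  have hNv'jb : Nv (Function.update s j (s jb)) jb = jb.val / m + 2 := by
    have hh := Nv_update_tgt hisj hlt rfl
    rw [hNv jb] at hh
    omega
  have hNv'other : ∀ x, x ≠ j → x ≠ jb → Nv (Function.update s j (s jb)) x = Nv s x := by
    intro x hxj hxjb
    rcases lt_or_gt_of_ne hxj with hlt' | hgt'
    · exact Nv_update_other hxj (Or.inl hlt')
    · refine Nv_update_other hxj (Or.inr ⟨?_, fun hc => hA x hc hgt'⟩)
      intro hc
      exact hxjb (hB x hc hgt')
  have hAset : univ.filter (fun x => Nv (Function.update s j (s jb)) x < Nv (Function.update s j (s jb)) j)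
      = univ.filter (fun x => Nv s x < Nv s j) := by
    ext x
    simp only [mem_filter, mem_univ, true_and]
    rcases eq_or_ne x j with rfl | hxj
    · rw [hNv'j, hNv x]
    · rcases eq_or_ne x jb with rfl | hxjb
      · rw [hNv'jb, hNv'j, hNv x, hNv j]
        omega
      · rw [hNv'other x hxj hxjb, hNv'j, hNv j]
  have hEset : univ.filter (fun x => Nv (Function.update s j (s jb)) x = Nv (Function.update s j (s jb)) j)
      = (univ.filter (fun x => Nv s x = Nv s j)).erase jb := by
    ext x
    simp only [mem_filter, mem_univ, true_and, mem_erase]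
    rcases eq_or_ne x j with rfl | hxj
    · constructor
      · intro _
        exact ⟨ne_of_lt hlt, rfl⟩
      · intro _
        rfl
    · rcases eq_or_ne x jb with rfl | hxjb
      · rw [hNv'jb, hNv'j, hNv x, hNv j]
        constructor
        · intro h
          omega
        · rintro ⟨h, _⟩
          exact absurd rfl h
      · rw [hNv'other x hxj hxjb, hNv'j, hNv x, hNv j]
        exact ⟨fun h => ⟨hxjb, h⟩, fun h => h.2⟩
  have hjbmem : jb ∈ univ.filter (fun x => Nv s x = Nv s j) := by
    simp only [mem_filter, mem_univ, true_and]
    rw [hNv jb, hNv j]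
    omega
  rw [Beneficial_iff]
  left
  unfold score
  rw [hAset, hEset, card_erase_of_mem hjbmem]
  have hpos : 0 < (univ.filter (fun x => Nv s x = Nv s j)).card := card_pos.mpr ⟨jb, hjbmem⟩
  omega

lemma sc1 (hm : 1 ≤ m) (hNv : ∀ x, Nv s x = x.val / m + 1)
    (hr1 : ((n-1)/m) * m + 1 < n) :
    ∃ (jj : Fin n) (bb : Fin m),
      Beneficial (fun _ => (1:ℝ)) (fun _ => (1:ℝ)) (fun _ => Fin.val) s jj bb := by
  have hm0 : 0 < m := hm
  have hn0 : 0 < n := by omega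
  have hdm := Nat.div_add_mod (n-1) m
  have hmod := Nat.mod_lt (n-1) hm0
  set r := (n-1)/m with hrdef
  have hcomm : m * r = r * m := Nat.mul_comm m r
  have hblockv : ∀ v, r*m ≤ v → v < n → v / m = r := by
    intro v h1 h2
    apply Nat.div_eq_of_lt_le h1
    have hrr : (r+1)*m = r*m+m := by ring
    omega
  have hjlt : r * m < n := by omega
  set j : Fin n := ⟨r*m, hjlt⟩ with hjdef
  set jb : Fin n := ⟨r*m+1, hr1⟩ with hjbdef
  have hjval : j.val = r*m := rfl
  have hjbval : jb.val = r*m+1 := rfl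
  have hltj : j < jb := by
    rw [Fin.lt_def, hjval, hjbval]
    omega
  have hbj : j.val / m = r := hblockv _ (le_of_eq hjval.symm) hjlt
  have hbjb : jb.val / m = r := hblockv _ (by omega) hr1
  have hblk : j.val/m = jb.val/m := by rw [hbj, hbjb]
  have hmach := (block_machine_ne hNv hltj hblk).symm
  refine ⟨j, s jb, beneficial_master hNv hltj hblk hmach ?_ ?_⟩
  · intro x hx hlt'
    have hxval : r*m < x.val := by
      have := Fin.lt_def.mp hlt'
      omega
    have hbx : x.val / m = r := hblockv _ (by omega) x.isLt
    exact (block_machine_ne hNv hlt' (by rw [hbj, hbx])) hx.symm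
  · intro x hx hlt'
    by_contra hxjb
    have hxval : r*m < x.val := by
      have := Fin.lt_def.mp hlt'
      omega
    have hbx : x.val / m = r := hblockv _ (by omega) x.isLt
    rcases lt_or_gt_of_ne (hxjb : x ≠ jb) with h1 | h1
    · exact (block_machine_ne hNv h1 (by rw [hbx, hbjb])) hx
    · exact (block_machine_ne hNv h1 (by rw [hbjb, hbx])) hx.symm

lemma exists_on_machine (hm : 0 < m) (hNv : ∀ x, Nv s x = x.val / m + 1)
    {q : ℕ} (hq : q * m + m ≤ n) (b : Fin m) :
    ∃ x : Fin n, s x = b ∧ x.val / m = q := by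
  have hdiv : ∀ v, q*m ≤ v → v < q*m + m → v/m = q := by
    intro v h1 h2
    apply Nat.div_eq_of_lt_le h1
    have hrr : (q+1)*m = q*m+m := by ring
    omega
  set B := univ.filter (fun x : Fin n => q * m ≤ x.val ∧ x.val < q*m + m) with hB
  have hcard : B.card = m := by
    rw [hB]
    refine (card_filter_univ_eq _ (fun v => q*m ≤ v ∧ v < q*m+m) (fun x => Iff.rfl)).trans ?_
    rw [card_range_filter_Ico]
    omega
  have hinj : Set.InjOn s B := by
    intro x hx y hy hxy
    rw [hB, coe_filter] at hx hy
    simp only [Set.mem_setOf_eq, mem_univ, true_and] at hx hy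
    by_contra hne
    rcases lt_or_gt_of_ne hne with h1 | h1
    · exact (block_machine_ne hNv h1 (by rw [hdiv _ hx.1 hx.2, hdiv _ hy.1 hy.2])) hxy
    · exact (block_machine_ne hNv h1 (by rw [hdiv _ hx.1 hx.2, hdiv _ hy.1 hy.2])) hxy.symm
  have himg : B.image s = univ := by
    apply Finset.eq_univ_of_card
    rw [Finset.card_image_of_injOn hinj, hcard, Fintype.card_fin]
  have hbmem : b ∈ B.image s := by
    rw [himg]
    exact mem_univ b
  obtain ⟨x, hxB, hxs⟩ := mem_image.mp hbmem
  rw [hB, mem_filter] at hxB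
  exact ⟨x, hxs, hdiv _ hxB.2.1 hxB.2.2⟩

lemma sc2 (hm : 3 ≤ m) (hNv : ∀ x, Nv s x = x.val / m + 1)
    {q : ℕ} (hq : q*m + 1 = n) (hq1 : 1 ≤ q) :
    ∃ (jj : Fin n) (bb : Fin m),
      Beneficial (fun _ => (1:ℝ)) (fun _ => (1:ℝ)) (fun _ => Fin.val) s jj bb := by
  have hm0 : 0 < m := by omega
  obtain ⟨q', rfl⟩ : ∃ q', q = q' + 1 := ⟨q - 1, by omega⟩
  have hqm : (q'+1)*m = q'*m + m := by ring
  have hdiv : ∀ v, q'*m ≤ v → v < q'*m + m → v/m = q' := by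
    intro v h1 h2
    apply Nat.div_eq_of_lt_le h1
    omega
  have htoplt : (q'+1)*m < n := by omega
  set jtop : Fin n := ⟨(q'+1)*m, htoplt⟩ with hjtopdef
  have hjtopval : jtop.val = (q'+1)*m := rfl
  have hjtopblk : jtop.val / m = q' + 1 := by
    have h2 : (q'+1+1)*m = q'*m + m + m := by ring
    apply Nat.div_eq_of_lt_le
    · show (q'+1)*m ≤ (q'+1)*m
      exact le_refl _
    · show (q'+1)*m < (q'+1+1)*m
      omega
  set atop := s jtop with hatopdef
  have hJ0lt : q'*m < n := by omega
  have hJ1lt : q'*m + 1 < n := by omega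
  set J0 : Fin n := ⟨q'*m, hJ0lt⟩ with hJ0def
  set J1 : Fin n := ⟨q'*m + 1, hJ1lt⟩ with hJ1def
  have hJ0val : (J0:ℕ) = q'*m := rfl
  have hJ1val : (J1:ℕ) = q'*m+1 := rfl
  have hJ0blk : J0.val / m = q' := hdiv (q'*m) (le_refl _) (by omega)
  have hJ1blk : J1.val / m = q' := hdiv (q'*m+1) (by omega) (by omega)
  have hJ01 : J0 < J1 := by
    rw [Fin.lt_def]
    exact Nat.lt_succ_self _
  set j : Fin n := if s J0 = atop then J1 else J0 with hjdef
  have hjblk : j.val / m = q' := by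
    rw [hjdef]
    split
    · exact hJ1blk
    · exact hJ0blk
  have hcne : s j ≠ atop := by
    rw [hjdef]
    split
    · rename_i h0
      intro h1
      exact (block_machine_ne hNv hJ01 (by rw [hJ0blk, hJ1blk])) (h0.trans h1.symm)
    · rename_i h0
      exact h0
  -- pick a machine different from s j and atop
  have hex : ∃ b : Fin m, b ≠ s j ∧ b ≠ atop := by
    by_contra hc
    push_neg at hc
    have hsub : (univ : Finset (Fin m)) ⊆ {s j, atop} := by
      intro b _
      simp only [mem_insert, mem_singleton]
      rcases eq_or_ne b (s j) with h | h
      · exact Or.inl h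
      · exact Or.inr (hc b h)
    have h1 := card_le_card hsub
    have h2 := card_insert_le (s j) ({atop} : Finset (Fin m))
    rw [card_univ, Fintype.card_fin] at h1
    rw [card_singleton] at h2
    omega
  obtain ⟨b, hbj, hbtop⟩ := hex
  obtain ⟨jb, hjbs, hjbblk⟩ := exists_on_machine hm0 hNv (q := q') (by omega) b
  -- jb.val bounds within block q'
  have hjbdm := Nat.div_add_mod jb.val m
  have hjbmod := Nat.mod_lt jb.val hm0
  rw [hjbblk] at hjbdm
  have hcomm' : m * q' = q' * m := Nat.mul_comm m q'
  have hjbval1 : q'*m ≤ jb.val := by omega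
  have hjbval2 : jb.val < q'*m + m := by omega
  have hjbJ0 : jb ≠ J0 := by
    intro h
    rw [h] at hjbs
    rw [hjdef] at hbj
    by_cases h0 : s J0 = atop
    · rw [h0] at hjbs
      exact hbtop hjbs.symm
    · rw [if_neg h0] at hbj
      exact hbj hjbs.symm
  have hjne : jb ≠ j := by
    intro h
    rw [h] at hjbs
    exact hbj hjbs.symm
  have hjlt : j < jb := by
    rw [Fin.lt_def]
    have hv0 : (jb:ℕ) ≠ q'*m := fun h => hjbJ0 (Fin.ext (h.trans hJ0val.symm))
    rw [hjdef]
    split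
    · rename_i h0
      have hvd : (jb:ℕ) ≠ q'*m + 1 := by
        intro h
        have hh : jb = J1 := Fin.ext (h.trans hJ1val.symm)
        rw [hh] at hjbs
        rw [hjdef, if_pos h0] at hbj
        exact hbj hjbs.symm
      rw [hJ1val]
      omega
    · rw [hJ0val]
      omega
  have hblk2 : j.val / m = jb.val / m := by rw [hjblk, hjbblk]
  have hmach : s jb ≠ s j := by
    rw [hjbs]
    exact hbj
  refine ⟨j, s jb, beneficial_master hNv hjlt hblk2 hmach ?_ ?_⟩
  · intro x hx hlt'
    have hxlow : q'*m < x.val := by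
      have h1 := Fin.lt_def.mp hlt'
      have h2 : q'*m ≤ j.val := by
        have := Nat.div_mul_le_self j.val m
        rw [hjblk] at this
        omega
      omega
    have hxhi : x.val < n := x.isLt
    rcases lt_or_ge x.val (q'*m + m) with hcase | hcase
    · -- same block as j
      have hbx : x.val / m = q' := hdiv _ (by omega) hcase
      exact (block_machine_ne hNv hlt' (by rw [hjblk, hbx])) hx.symm
    · -- x = jtop
      have hxeq : x = jtop := by
        apply Fin.ext
        rw [hjtopval]
        omega
      rw [hxeq] at hx
      exact hcne hx.symm
  · intro x hx hlt'
    have hxlow : q'*m < x.val := by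
      have h1 := Fin.lt_def.mp hlt'
      have h2 : q'*m ≤ j.val := by
        have := Nat.div_mul_le_self j.val m
        rw [hjblk] at this
        omega
      omega
    rcases lt_or_ge x.val (q'*m + m) with hcase | hcase
    · have hbx : x.val / m = q' := hdiv _ (by omega) hcase
      by_contra hxjb
      rcases lt_or_gt_of_ne (hxjb : x ≠ jb) with h1 | h1
      · exact (block_machine_ne hNv h1 (by rw [hbx, hjbblk])) hx
      · exact (block_machine_ne hNv h1 (by rw [hjbblk, hbx])) hx.symm
    · have hxeq : x = jtop := by
        apply Fin.ext
        rw [hjtopval]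
        have hxlt := x.isLt
        omega
      rw [hxeq] at hx
      exact absurd (hjbs.symm.trans hx.symm) hbtop

lemma no_NE (hn : 2 ≤ n) (hm : 2 ≤ m) (hno : ¬(m = 2 ∧ Odd n)) (s : Fin n → Fin m) :
    ¬ IsNE (fun _ => (1:ℝ)) (fun _ => (1:ℝ)) (fun _ => Fin.val) s := by
  intro hNE
  have hG : ∀ (j : Fin n) (b : Fin m),
      (univ.filter (fun x => s x = s j ∧ x < j)).card
        ≤ (univ.filter (fun x => s x = b ∧ x < j)).card := by
    intro j b
    rcases eq_or_ne b (s j) with rfl | hbne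
    · exact le_refl _
    · by_contra hc
      push_neg at hc
      exact hNE j b (beneficial_of_imbalance hbne hc)
  have hNv := Nv_formula (by omega : 1 ≤ m) hG
  have hm0 : 0 < m := by omega
  obtain ⟨Q, hQ⟩ : ∃ Q, (n-1)/m = Q := ⟨_, rfl⟩
  have hdml : Q * m ≤ n - 1 := by
    rw [← hQ]
    exact Nat.div_mul_le_self _ _
  by_cases hbig : Q * m + 1 < n
  · obtain ⟨jj, bb, hben⟩ := sc1 (by omega : 1 ≤ m) hNv (by rw [hQ]; exact hbig)
    exact hNE jj bb hben
  · push_neg at hbig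
    have heq : Q * m + 1 = n := by omega
    have hq1 : 1 ≤ Q := by
      rcases Nat.eq_zero_or_pos Q with h0 | h0
      · rw [h0, Nat.zero_mul] at heq
        omega
      · exact h0
    rcases lt_or_ge m 3 with hm2 | hm3
    · have hm2' : m = 2 := by omega
      subst hm2'
      exact hno ⟨rfl, ⟨Q, by omega⟩⟩
    · obtain ⟨jj, bb, hben⟩ := sc2 hm3 hNv heq hq1
      exact hNE jj bb hben


lemma card_range_filter_eq_pair (n a b : ℕ) (hab : a < b) :
    ((range n).filter (fun v => v = a ∨ v = b)).card
      = (if a < n then 1 else 0) + (if b < n then 1 else 0) := by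
  by_cases ha : a < n
  · by_cases hb : b < n
    · have hset : (range n).filter (fun v => v = a ∨ v = b) = {a, b} := by
        ext v
        simp only [mem_filter, mem_range, mem_insert, mem_singleton]
        omega
      rw [hset, card_insert_of_notMem (by simp only [mem_singleton]; omega),
        card_singleton, if_pos ha, if_pos hb]
    · have hset : (range n).filter (fun v => v = a ∨ v = b) = {a} := by
        ext v
        simp only [mem_filter, mem_range, mem_singleton]
        omega
      rw [hset, card_singleton, if_pos ha, if_neg hb]
  · by_cases hb : b < n
    · exact absurd (lt_trans hab hb) ha
    · have hset : (range n).filter (fun v => v = a ∨ v = b) = ∅ := by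
        ext v
        simp only [mem_filter, mem_range, notMem_empty, iff_false]
        omega
      rw [hset, card_empty, if_neg ha, if_neg hb]

lemma card_range_filter_lt_or_eq (n a b : ℕ) (hab : a ≤ b) :
    ((range n).filter (fun v => v < a ∨ v = b)).card
      = min a n + (if b < n then 1 else 0) := by
  by_cases hb : b < n
  · have hset : (range n).filter (fun v => v < a ∨ v = b)
        = insert b ((range n).filter (fun v => v < a)) := by
      ext v
      simp only [mem_filter, mem_range, mem_insert]
      omega
    rw [hset, card_insert_of_notMem (by simp only [mem_filter, mem_range]; omega),
      card_range_filter_lt, if_pos hb]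
  · have hset : (range n).filter (fun v => v < a ∨ v = b)
        = (range n).filter (fun v => v < a) := by
      ext v
      simp only [mem_filter, mem_range]
      omega
    rw [hset, card_range_filter_lt, if_neg hb]
    omega

/-- the alternating (parity) profile on two machines. -/
def par (n : ℕ) : Fin n → Fin 2 := fun x => ⟨x.val % 2, Nat.mod_lt _ (by norm_num)⟩

lemma par_eq_iff (x y : Fin n) : par n x = par n y ↔ x.val % 2 = y.val % 2 := by
  unfold par
  rw [Fin.mk.injEq]

lemma Nv_par (x : Fin n) : Nv (par n) x = x.val / 2 + 1 := by
  unfold Nv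
  have h1 : (univ.filter (fun y => par n y = par n x ∧ y ≤ x)).card
      = ((range n).filter (fun v => v % 2 = x.val % 2 ∧ v ≤ x.val)).card := by
    apply card_filter_univ_eq
    intro y
    exact and_congr (par_eq_iff y x) Fin.le_def
  rw [h1]
  have h2 : (range n).filter (fun v => v % 2 = x.val % 2 ∧ v ≤ x.val)
      = (range (x.val/2 + 1)).image (fun t => 2*t + x.val % 2) := by
    ext v
    simp only [mem_filter, mem_range, mem_image]
    constructor
    · rintro ⟨hv, h3, h4⟩
      exact ⟨v/2, by omega, by omega⟩
    · rintro ⟨t, ht, rfl⟩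
      have hxlt := x.isLt
      exact ⟨by omega, by omega, by omega⟩
  rw [h2, Finset.card_image_of_injective _ (fun a b h => by omega), card_range]

lemma cnt_par (x : Fin n) (i : Fin 2) :
    (univ.filter (fun y : Fin n => par n y = i ∧ y < x)).card
      = (x.val + 1 - i.val)/2 := by
  have hiv := i.isLt
  have h1 : (univ.filter (fun y : Fin n => par n y = i ∧ y < x)).card
      = ((range n).filter (fun v => v % 2 = i.val ∧ v < x.val)).card := by
    apply card_filter_univ_eq
    intro y
    exact and_congr (Fin.ext_iff (a := par n y) (b := i)) Fin.lt_def
  rw [h1]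
  have h2 : (range n).filter (fun v => v % 2 = i.val ∧ v < x.val)
      = (range ((x.val + 1 - i.val)/2)).image (fun t => 2*t + i.val) := by
    ext v
    simp only [mem_filter, mem_range, mem_image]
    constructor
    · rintro ⟨hv, h3, h4⟩
      exact ⟨v/2, by omega, by omega⟩
    · rintro ⟨t, ht, rfl⟩
      have hxlt := x.isLt
      exact ⟨by omega, by omega, by omega⟩
  rw [h2, Finset.card_image_of_injective _ (fun a b h => by omega), card_range]

lemma NE_par (hodd : Odd n) :
    IsNE (fun _ => (1:ℝ)) (fun _ => (1:ℝ)) (fun _ => Fin.val) (par n) := by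
  obtain ⟨K, hK⟩ := hodd
  intro j i
  rw [Beneficial_iff]
  by_cases hij : i = par n j
  · rw [hij, Function.update_eq_self]
    rintro (hc | ⟨_, hc⟩) <;> exact absurd hc (lt_irrefl _)
  · -- i is the other machine
    have hJ := j.isLt
    have hivne : (i:ℕ) ≠ j.val % 2 := by
      intro h
      exact hij (Fin.ext h)
    have hiv : (i:ℕ) = 1 - j.val % 2 := by
      have := i.isLt
      omega
    have hNv'j : Nv (Function.update (par n) j i) j = (j.val + 1 - i.val)/2 + 1 := by
      rw [Nv_update_self hij, cnt_par]
    have hother : ∀ x : Fin n, x.val < j.val →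
        Nv (Function.update (par n) j i) x = x.val/2 + 1 := by
      intro x hx
      rw [Nv_update_other (fun h => by rw [h] at hx; omega) (Or.inl (Fin.lt_def.mpr hx)),
        Nv_par]
    have hsrc : ∀ x : Fin n, j.val < x.val → x.val % 2 = j.val % 2 →
        Nv (Function.update (par n) j i) x = x.val/2 := by
      intro x hx hp
      have hh := Nv_update_src hij (Fin.lt_def.mpr hx) (Fin.ext hp : par n x = par n j)
      rw [Nv_par] at hh
      omega
    have htgt : ∀ x : Fin n, j.val < x.val → x.val % 2 ≠ j.val % 2 →
        Nv (Function.update (par n) j i) x = x.val/2 + 2 := by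
      intro x hx hp
      have hpx : (par n x).val = i.val := by
        show x.val % 2 = i.val
        omega
      rw [Nv_update_tgt hij (Fin.lt_def.mpr hx) (Fin.ext hpx), Nv_par]
    -- old ranks
    have hBset : univ.filter (fun x => Nv (par n) x < Nv (par n) j)
        = univ.filter (fun x => x.val < 2*(j.val/2)) := by
      ext x
      simp only [mem_filter, mem_univ, true_and]
      rw [Nv_par, Nv_par]
      constructor <;> intro <;> omega
    have hBcard : (univ.filter (fun x : Fin n => x.val < 2*(j.val/2))).card = 2*(j.val/2) := by
      refine (card_filter_univ_eq _ (fun v => v < 2*(j.val/2)) (fun x => Iff.rfl)).trans ?_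
      rw [card_range_filter_lt]
      omega
    have hEBset : univ.filter (fun x => Nv (par n) x = Nv (par n) j)
        = univ.filter (fun x => x.val = 2*(j.val/2) ∨ x.val = 2*(j.val/2) + 1) := by
      ext x
      simp only [mem_filter, mem_univ, true_and]
      rw [Nv_par, Nv_par]
      constructor <;> intro <;> omega
    have hEBcard : (univ.filter
        (fun x : Fin n => x.val = 2*(j.val/2) ∨ x.val = 2*(j.val/2) + 1)).card
        = 1 + (if 2*(j.val/2) + 1 < n then 1 else 0) := by
      refine (card_filter_univ_eq _
        (fun v => v = 2*(j.val/2) ∨ v = 2*(j.val/2) + 1) (fun x => Iff.rfl)).trans ?_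
      rw [card_range_filter_eq_pair _ _ _ (by omega)]
      have h1 : 2*(j.val/2) < n := by omega
      rw [if_pos h1]
    have hSold : score (par n) j
        = 2*(2*(j.val/2)) + (1 + (if 2*(j.val/2) + 1 < n then 1 else 0)) := by
      unfold score
      rw [hBset, hEBset, hBcard, hEBcard]
    by_cases hpar2 : j.val % 2 = 0
    · -- even case: deviation keeps everything equal
      have hNv'jval : Nv (Function.update (par n) j i) j = j.val/2 + 1 := by
        rw [hNv'j]
        omega
      have hAset : univ.filter
          (fun x => Nv (Function.update (par n) j i) x < Nv (Function.update (par n) j i) j)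
          = univ.filter (fun x : Fin n => x.val < j.val) := by
        ext x
        simp only [mem_filter, mem_univ, true_and]
        rcases eq_or_ne x j with rfl | hxj
        · exact ⟨fun h => absurd h (lt_irrefl _), fun h => absurd h (lt_irrefl _)⟩
        · have hxvne : x.val ≠ j.val := fun h => hxj (Fin.ext h)
          rw [hNv'jval]
          rcases lt_or_gt_of_ne hxvne with h | h
          · rw [hother x h]
            constructor <;> intro <;> omega
          · by_cases hp : x.val % 2 = j.val % 2
            · rw [hsrc x h hp]
              constructor <;> intro <;> omega
            · rw [htgt x h hp]
              constructor <;> intro <;> omega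
      have hAcard : (univ.filter (fun x : Fin n => x.val < j.val)).card = j.val := by
        refine (card_filter_univ_eq _ (fun v => v < j.val) (fun x => Iff.rfl)).trans ?_
        rw [card_range_filter_lt]
        omega
      have hEset : univ.filter
          (fun x => Nv (Function.update (par n) j i) x = Nv (Function.update (par n) j i) j)
          = univ.filter (fun x : Fin n => x.val = j.val ∨ x.val = j.val + 2) := by
        ext x
        simp only [mem_filter, mem_univ, true_and]
        rcases eq_or_ne x j with rfl | hxj
        · exact ⟨fun _ => Or.inl rfl, fun _ => rfl⟩
        · have hxvne : x.val ≠ j.val := fun h => hxj (Fin.ext h)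
          rw [hNv'jval]
          rcases lt_or_gt_of_ne hxvne with h | h
          · rw [hother x h]
            constructor <;> intro <;> omega
          · by_cases hp : x.val % 2 = j.val % 2
            · rw [hsrc x h hp]
              constructor <;> intro <;> omega
            · rw [htgt x h hp]
              constructor <;> intro <;> omega
      have hEcard : (univ.filter
          (fun x : Fin n => x.val = j.val ∨ x.val = j.val + 2)).card
          = 1 + (if j.val + 2 < n then 1 else 0) := by
        refine (card_filter_univ_eq _
          (fun v => v = j.val ∨ v = j.val + 2) (fun x => Iff.rfl)).trans ?_
        rw [card_range_filter_eq_pair _ _ _ (by omega), if_pos hJ]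
      have hSnew : score (Function.update (par n) j i) j
          = 2*j.val + (1 + (if j.val + 2 < n then 1 else 0)) := by
        unfold score
        rw [hAset, hEset, hAcard, hEcard]
      have hifeq : (if j.val + 2 < n then 1 else 0) = (if 2*(j.val/2) + 1 < n then 1 else 0) := by
        split_ifs <;> omega
      rintro (hc | ⟨_, hc⟩)
      · rw [hSnew, hSold] at hc
        omega
      · rw [hNv'jval, Nv_par] at hc
        omega
    · -- odd case: deviation is strictly worse in rank
      have hNv'jval : Nv (Function.update (par n) j i) j = j.val/2 + 2 := by
        rw [hNv'j]
        omega
      have hAset : univ.filter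
          (fun x => Nv (Function.update (par n) j i) x < Nv (Function.update (par n) j i) j)
          = univ.filter (fun x : Fin n => x.val < j.val ∨ x.val = j.val + 2) := by
        ext x
        simp only [mem_filter, mem_univ, true_and]
        rcases eq_or_ne x j with rfl | hxj
        · rw [hNv'jval]
          constructor <;> intro <;> omega
        · have hxvne : x.val ≠ j.val := fun h => hxj (Fin.ext h)
          rw [hNv'jval]
          rcases lt_or_gt_of_ne hxvne with h | h
          · rw [hother x h]
            constructor <;> intro <;> omega
          · by_cases hp : x.val % 2 = j.val % 2
            · rw [hsrc x h hp]
              constructor <;> intro <;> omega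
            · rw [htgt x h hp]
              constructor <;> intro <;> omega
      have hAcard : (univ.filter
          (fun x : Fin n => x.val < j.val ∨ x.val = j.val + 2)).card
          = j.val + (if j.val + 2 < n then 1 else 0) := by
        refine (card_filter_univ_eq _
          (fun v => v < j.val ∨ v = j.val + 2) (fun x => Iff.rfl)).trans ?_
        rw [card_range_filter_lt_or_eq _ _ _ (by omega)]
        omega
      have hEset : univ.filter
          (fun x => Nv (Function.update (par n) j i) x = Nv (Function.update (par n) j i) j)
          = univ.filter (fun x : Fin n => x.val = j.val ∨ x.val = j.val + 4) := by
        ext x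
        simp only [mem_filter, mem_univ, true_and]
        rcases eq_or_ne x j with rfl | hxj
        · exact ⟨fun _ => Or.inl rfl, fun _ => rfl⟩
        · have hxvne : x.val ≠ j.val := fun h => hxj (Fin.ext h)
          rw [hNv'jval]
          rcases lt_or_gt_of_ne hxvne with h | h
          · rw [hother x h]
            constructor <;> intro <;> omega
          · by_cases hp : x.val % 2 = j.val % 2
            · rw [hsrc x h hp]
              constructor <;> intro <;> omega
            · rw [htgt x h hp]
              constructor <;> intro <;> omega
      have hEcard : (univ.filter
          (fun x : Fin n => x.val = j.val ∨ x.val = j.val + 4)).card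
          = 1 + (if j.val + 4 < n then 1 else 0) := by
        refine (card_filter_univ_eq _
          (fun v => v = j.val ∨ v = j.val + 4) (fun x => Iff.rfl)).trans ?_
        rw [card_range_filter_eq_pair _ _ _ (by omega), if_pos hJ]
      have hSnew : score (Function.update (par n) j i) j
          = 2*(j.val + (if j.val + 2 < n then 1 else 0))
            + (1 + (if j.val + 4 < n then 1 else 0)) := by
        unfold score
        rw [hAset, hEset, hAcard, hEcard]
      rintro (hc | ⟨hc, _⟩)
      · rw [hSnew, hSold] at hc
        split_ifs at hc <;> omega
      · rw [hSnew, hSold] at hc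
        split_ifs at hc <;> omega


def NvGen (π : Fin n → ℕ) (s : Fin n → Fin m) (j : Fin n) : ℕ :=
  (univ.filter (fun y => s y = s j ∧ π y ≤ π j)).card

def scoreGen (π : Fin n → ℕ) (s : Fin n → Fin m) (j : Fin n) : ℕ :=
  2 * (univ.filter (fun y => NvGen π s y < NvGen π s j)).card +
    (univ.filter (fun y => NvGen π s y = NvGen π s j)).card

lemma NvGen_val (s : Fin n → Fin m) (j : Fin n) : NvGen Fin.val s j = Nv s j := by
  unfold NvGen Nv
  congr 1

lemma scoreGen_val (s : Fin n → Fin m) (j : Fin n) : scoreGen Fin.val s j = score s j := by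
  unfold scoreGen score
  simp only [NvGen_val]

lemma Ctime_count (π : Fin n → ℕ) (s : Fin n → Fin m) (j : Fin n) :
    Ctime (fun _ => (1:ℝ)) (fun _ => (1:ℝ)) (fun _ => π) s j = (NvGen π s j : ℝ) := by
  unfold Ctime NvGen
  rw [div_one, Finset.sum_const, nsmul_eq_mul, mul_one, Nat.cast_inj]
  congr 1
  ext y
  simp only [mem_filter, mem_univ, true_and]

lemma rankOf_count (π : Fin n → ℕ) (s : Fin n → Fin m) (j : Fin n) :
    rankOf (fun _ => (1:ℝ)) (fun _ => (1:ℝ)) (fun _ => π) s j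
      = ((scoreGen π s j : ℝ) + 1) / 2 := by
  have hlt : (univ.filter (fun j' => Ctime (fun _ => (1:ℝ)) (fun _ => (1:ℝ)) (fun _ => π) s j' <
      Ctime (fun _ => (1:ℝ)) (fun _ => (1:ℝ)) (fun _ => π) s j))
      = (univ.filter (fun j' => NvGen π s j' < NvGen π s j)) := by
    ext y
    simp only [mem_filter, mem_univ, true_and, Ctime_count, Nat.cast_lt]
  have heq : (univ.filter (fun j' => Ctime (fun _ => (1:ℝ)) (fun _ => (1:ℝ)) (fun _ => π) s j' =
      Ctime (fun _ => (1:ℝ)) (fun _ => (1:ℝ)) (fun _ => π) s j))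
      = (univ.filter (fun j' => NvGen π s j' = NvGen π s j)) := by
    ext y
    simp only [mem_filter, mem_univ, true_and, Ctime_count, Nat.cast_inj]
  unfold rankOf scoreGen
  rw [hlt, heq]
  push_cast
  ring

lemma Beneficial_count (π : Fin n → ℕ) (s : Fin n → Fin m) (j : Fin n) (i : Fin m) :
    Beneficial (fun _ => (1:ℝ)) (fun _ => (1:ℝ)) (fun _ => π) s j i ↔
      (scoreGen π (Function.update s j i) j < scoreGen π s j ∨
        (scoreGen π (Function.update s j i) j = scoreGen π s j ∧
          NvGen π (Function.update s j i) j < NvGen π s j)) := by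
  have h1 : ∀ a b : ℕ, (((a:ℝ)+1)/2 < ((b:ℝ)+1)/2 ↔ a < b) := by
    intro a b
    constructor
    · intro h; exact_mod_cast (by linarith : (a:ℝ) < b)
    · intro h; have : (a:ℝ) < b := by exact_mod_cast h
      linarith
  have h2 : ∀ a b : ℕ, (((a:ℝ)+1)/2 = ((b:ℝ)+1)/2 ↔ a = b) := by
    intro a b
    constructor
    · intro h; exact_mod_cast (by linarith : (a:ℝ) = b)
    · intro h; subst h; rfl
  unfold Beneficial
  rw [rankOf_count, rankOf_count, h1, h2, Ctime_count, Ctime_count, Nat.cast_lt]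
  congr!

lemma NvGen_transfer {π : Fin n → ℕ} {τ : Equiv.Perm (Fin n)}
    (key : ∀ a b : Fin n, π (τ a) ≤ π (τ b) ↔ a ≤ b)
    (s : Fin n → Fin m) (x : Fin n) :
    NvGen π s (τ x) = NvGen Fin.val (s ∘ τ) x := by
  unfold NvGen
  apply Finset.card_bij (fun a _ => τ.symm a)
  · intro a ha
    rw [mem_filter] at ha
    rw [mem_filter]
    refine ⟨mem_univ _, ?_, ?_⟩
    · show s (τ (τ.symm a)) = s (τ x)
      rw [Equiv.apply_symm_apply]
      exact ha.2.1
    · refine (key _ _).mp ?_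
      show π (τ (τ.symm a)) ≤ π (τ x)
      rw [Equiv.apply_symm_apply]
      exact ha.2.2
  · intro a _ b _ h
    exact τ.symm.injective h
  · intro b hb
    rw [mem_filter] at hb
    refine ⟨τ b, ?_, by rw [Equiv.symm_apply_apply]⟩
    rw [mem_filter]
    exact ⟨mem_univ _, hb.2.1, (key _ _).mpr hb.2.2⟩

lemma scoreGen_transfer {π : Fin n → ℕ} {τ : Equiv.Perm (Fin n)}
    (key : ∀ a b : Fin n, π (τ a) ≤ π (τ b) ↔ a ≤ b)
    (s : Fin n → Fin m) (x : Fin n) :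
    scoreGen π s (τ x) = scoreGen Fin.val (s ∘ τ) x := by
  have hgen : ∀ a : Fin n, NvGen π s a = NvGen Fin.val (s ∘ τ) (τ.symm a) := by
    intro a
    conv_lhs => rw [← Equiv.apply_symm_apply τ a]
    exact NvGen_transfer key s (τ.symm a)
  unfold scoreGen
  have hlt : (univ.filter (fun y => NvGen π s y < NvGen π s (τ x))).card
      = (univ.filter (fun y => NvGen Fin.val (s ∘ τ) y < NvGen Fin.val (s ∘ τ) x)).card := by
    apply Finset.card_bij (fun a _ => τ.symm a)
    · intro a ha
      rw [mem_filter] at ha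
      rw [mem_filter]
      refine ⟨mem_univ _, ?_⟩
      rw [← hgen a, ← NvGen_transfer key s x]
      exact ha.2
    · intro a _ b _ h
      exact τ.symm.injective h
    · intro b hb
      rw [mem_filter] at hb
      refine ⟨τ b, ?_, by rw [Equiv.symm_apply_apply]⟩
      rw [mem_filter]
      refine ⟨mem_univ _, ?_⟩
      rw [NvGen_transfer key s b, NvGen_transfer key s x]
      exact hb.2
  have heq : (univ.filter (fun y => NvGen π s y = NvGen π s (τ x))).card
      = (univ.filter (fun y => NvGen Fin.val (s ∘ τ) y = NvGen Fin.val (s ∘ τ) x)).card := by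
    apply Finset.card_bij (fun a _ => τ.symm a)
    · intro a ha
      rw [mem_filter] at ha
      rw [mem_filter]
      refine ⟨mem_univ _, ?_⟩
      rw [← hgen a, ← NvGen_transfer key s x]
      exact ha.2
    · intro a _ b _ h
      exact τ.symm.injective h
    · intro b hb
      rw [mem_filter] at hb
      refine ⟨τ b, ?_, by rw [Equiv.symm_apply_apply]⟩
      rw [mem_filter]
      refine ⟨mem_univ _, ?_⟩
      rw [NvGen_transfer key s b, NvGen_transfer key s x]
      exact hb.2
  rw [hlt, heq]

lemma Beneficial_transfer (π : Fin n → ℕ) (τ : Equiv.Perm (Fin n))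
    (key : ∀ a b : Fin n, π (τ a) ≤ π (τ b) ↔ a ≤ b)
    (s : Fin n → Fin m) (x : Fin n) (i : Fin m) :
    Beneficial (fun _ => (1:ℝ)) (fun _ => (1:ℝ)) (fun _ => π) s (τ x) i ↔
      Beneficial (fun _ => (1:ℝ)) (fun _ => (1:ℝ)) (fun _ => Fin.val) (s ∘ τ) x i := by
  have hupd : (Function.update s (τ x) i) ∘ τ = Function.update (s ∘ τ) x i := by
    funext y
    rcases eq_or_ne y x with rfl | h
    · show Function.update s (τ y) i (τ y) = Function.update (s ∘ τ) y i y
      rw [Function.update_self, Function.update_self]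
    · show Function.update s (τ x) i (τ y) = Function.update (s ∘ τ) x i y
      rw [Function.update_of_ne (fun hc => h (τ.injective hc)), Function.update_of_ne h]
      rfl
  have e1 : scoreGen π (Function.update s (τ x) i) (τ x)
      = scoreGen Fin.val (Function.update (s ∘ τ) x i) x := by
    rw [← hupd]
    exact scoreGen_transfer key _ x
  have e2 := scoreGen_transfer key s x
  have e3 : NvGen π (Function.update s (τ x) i) (τ x)
      = NvGen Fin.val (Function.update (s ∘ τ) x i) x := by
    rw [← hupd]
    exact NvGen_transfer key _ x
  have e4 := NvGen_transfer key s x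
  rw [Beneficial_count, Beneficial_count, e1, e2, e3, e4]

theorem core_exists_iff (n m : ℕ) (hn : 2 ≤ n) (hm : 2 ≤ m)
    (π : Fin n → ℕ) (hπ : Function.Injective π) :
    (∃ s : Fin n → Fin m,
      IsNE (fun _ => (1:ℝ)) (fun _ => (1:ℝ)) (fun _ => π) s) ↔ (m = 2 ∧ Odd n) := by
  set τ := Tuple.sort π with hτ
  have hmono : Monotone (π ∘ τ) := Tuple.monotone_sort π
  have hsm : StrictMono (π ∘ τ) := hmono.strictMono_of_injective (hπ.comp τ.injective)
  have key : ∀ a b : Fin n, π (τ a) ≤ π (τ b) ↔ a ≤ b := fun a b => hsm.le_iff_le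
  have htrans : ∀ s : Fin n → Fin m,
      IsNE (fun _ => (1:ℝ)) (fun _ => (1:ℝ)) (fun _ => π) s ↔
      IsNE (fun _ => (1:ℝ)) (fun _ => (1:ℝ)) (fun _ => Fin.val) (s ∘ τ) := by
    intro s
    constructor
    · intro h x i
      rw [← Beneficial_transfer π τ key s x i]
      exact h (τ x) i
    · intro h j i
      have hj : j = τ (τ.symm j) := (Equiv.apply_symm_apply τ j).symm
      rw [hj, Beneficial_transfer π τ key s (τ.symm j) i]
      exact h (τ.symm j) i
  constructor
  · rintro ⟨s, hs⟩
    by_contra hno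
    exact no_NE hn hm hno (s ∘ τ) ((htrans s).mp hs)
  · rintro ⟨rfl, hodd⟩
    refine ⟨par n ∘ τ.symm, ?_⟩
    rw [htrans]
    have hcomp : (par n ∘ τ.symm) ∘ τ = par n := by
      funext y
      show par n (τ.symm (τ y)) = par n y
      rw [Equiv.symm_apply_apply]
    rw [hcomp]
    exact NE_par hodd

end Core

/-- With a global priority list, unit jobs on identical machines: a NE exists
iff `m = 2` and `n` is odd. -/
theorem global_NE_iff (n m : ℕ) (hn : 2 ≤ n) (hm : 2 ≤ m)
    (π : Fin n → ℕ) (hπ : Function.Injective π) :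
    (∃ s : Fin n → Fin m,
      IsNE (fun _ => (1:ℝ)) (fun _ => (1:ℝ)) (fun _ => π) s) ↔ (m = 2 ∧ Odd n) :=
  core_exists_iff n m hn hm π hπ
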